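/- Let X_1,...,X_n be random variables with finite first moments and define N(s) := Σ_{i=1}^n 1_{{|X_i| ≥ s}}. Then for any 1 ≤ k ≤ n, E[max_{|I|=k} Σ_{i∈I} |X_i|] = ∫_0^∞ Σ_{l=1}^k P(N(s) ≥ l) ds. -/

import Mathlib

open MeasureTheory Finset Pointwise

noncomputable def maxKSum {n : ℕ} (k : ℕ) (x : Fin n → ℝ) : ℝ :=
  sSup {y | ∃ I : Finset (Fin n), I.card = k ∧ y = ∑ i ∈ I, |x i|}

noncomputable def kthMax {n : ℕ} (k : ℕ) (x : Fin n → ℝ) : ℝ :=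
  sSup {t : ℝ | k ≤ (Finset.univ.filter (fun i => t ≤ |x i|)).card}

noncomputable def tk {Ω : Type*} [MeasurableSpace Ω] (μ : Measure Ω) {n : ℕ}
    (X : Fin n → Ω → ℝ) (k : ℝ) : ℝ :=
  sInf {t : ℝ | 0 < t ∧ ∑ i, ∫ ω in {ω | t ≤ |X i ω|}, |X i ω| ∂μ ≤ k * t}

noncomputable def tstar {Ω : Type*} [MeasurableSpace Ω] (μ : Measure Ω) {n : ℕ}
    (X : Fin n → Ω → ℝ) (p : ℝ) : ℝ :=
  sInf {t : ℝ | 0 < t ∧ ∑ i, (μ {ω | t ≤ |X i ω|}).toReal ≤ p}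

def IsLogConcave {E : Type*} [AddCommGroup E] [Module ℝ E] [TopologicalSpace E]
    [MeasurableSpace E] (ν : Measure E) : Prop :=
  ∀ (K L : Set E) (l : ℝ), IsCompact K → IsCompact L → K.Nonempty → L.Nonempty →
    l ∈ Set.Icc (0 : ℝ) 1 → ν K ^ l * ν L ^ (1 - l) ≤ ν (l • K + (1 - l) • L)

noncomputable def med {Ω : Type*} [MeasurableSpace Ω] (μ : Measure Ω) (f : Ω → ℝ) : ℝ :=
  sInf {t : ℝ | (1 : ℝ) / 2 ≤ (μ {ω | f ω ≤ t}).toReal}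

noncomputable def kthMaxOn {n : ℕ} (J : Finset (Fin n)) (k : ℕ) (x : Fin n → ℝ) : ℝ :=
  sSup {t : ℝ | k ≤ (J.filter (fun i => t ≤ |x i|)).card}

lemma kthMax_key {n : ℕ} (x : Fin n → ℝ) {l : ℕ} (h1 : 1 ≤ l) (hn : l ≤ n) :
    kthMax l x = |x (Tuple.sort (fun i => |x i|) ⟨n - l, by omega⟩)| ∧
    ∀ t : ℝ, (l ≤ (Finset.univ.filter (fun i => t ≤ |x i|)).card ↔ t ≤ kthMax l x) := by
  set a : Fin n → ℝ := fun i => |x i| with ha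
  set σ := Tuple.sort a with hσ
  have hmono : Monotone (a ∘ σ) := Tuple.monotone_sort a
  set j0 : Fin n := ⟨n - l, by omega⟩ with hj0
  have hmem : l ≤ (Finset.univ.filter (fun i => a (σ j0) ≤ a i)).card := by
    have hcard : (Finset.Ici j0).card = l := by
      rw [Fin.card_Ici]; simp only [hj0]; omega
    calc l = (Finset.Ici j0).card := hcard.symm
      _ ≤ (Finset.univ.filter (fun i => a (σ j0) ≤ a i)).card := by
          apply Finset.card_le_card_of_injOn σ
          · intro j hj
            simp only [Finset.mem_coe, Finset.mem_filter, Finset.mem_univ, true_and]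
            exact hmono (Finset.mem_Ici.mp hj)
          · exact σ.injective.injOn
  have hub : ∀ t : ℝ, l ≤ (Finset.univ.filter (fun i => t ≤ a i)).card → t ≤ a (σ j0) := by
    intro t ht
    by_contra h
    push_neg at h
    have hsub : (Finset.univ.filter (fun i => t ≤ a i)).card ≤ (Finset.Ioi j0).card := by
      apply Finset.card_le_card_of_injOn σ.symm
      · intro i hi
        simp only [Finset.mem_coe, Finset.mem_filter, Finset.mem_univ, true_and] at hi ⊢
        rw [Finset.mem_Ioi]
        by_contra hle
        push_neg at hle
        have : a (σ (σ.symm i)) ≤ a (σ j0) := hmono hle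
        rw [Equiv.apply_symm_apply] at this
        linarith
      · exact σ.symm.injective.injOn
    rw [Fin.card_Ioi] at hsub
    simp only [hj0] at hsub
    omega
  have heq : kthMax l x = a (σ j0) := by
    apply le_antisymm
    · exact csSup_le ⟨_, hmem⟩ hub
    · exact le_csSup ⟨_, hub⟩ hmem
  refine ⟨heq, fun t => ⟨fun ht => heq ▸ hub t ht, fun ht => ?_⟩⟩
  rw [heq] at ht
  refine le_trans hmem (Finset.card_le_card ?_)
  intro i hi
  simp only [Finset.mem_filter, Finset.mem_univ, true_and] at hi ⊢
  linarith


lemma kthMaxOn_one {n : ℕ} (x : Fin n → ℝ) {I : Finset (Fin n)} {i₀ : Fin n}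
    (hi₀ : i₀ ∈ I) (hmax : ∀ i ∈ I, |x i| ≤ |x i₀|) : kthMaxOn I 1 x = |x i₀| := by
  have hset : {t : ℝ | 1 ≤ (I.filter (fun i => t ≤ |x i|)).card} = Set.Iic |x i₀| := by
    ext t
    simp only [Set.mem_setOf_eq, Set.mem_Iic, Finset.one_le_card, Finset.Nonempty]
    constructor
    · rintro ⟨i, hi⟩
      simp only [Finset.mem_filter] at hi
      exact hi.2.trans (hmax i hi.1)
    · intro ht
      exact ⟨i₀, Finset.mem_filter.mpr ⟨hi₀, ht⟩⟩
  unfold kthMaxOn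
  rw [hset, csSup_Iic]

lemma kthMaxOn_succ {n : ℕ} (x : Fin n → ℝ) {I : Finset (Fin n)} {i₀ : Fin n}
    (hi₀ : i₀ ∈ I) (hmax : ∀ i ∈ I, |x i| ≤ |x i₀|) {l : ℕ} (h1 : 1 ≤ l) :
    kthMaxOn I (l + 1) x = kthMaxOn (I.erase i₀) l x := by
  unfold kthMaxOn
  congr 1
  ext t
  simp only [Set.mem_setOf_eq]
  by_cases h : t ≤ |x i₀|
  · have hmem : i₀ ∈ I.filter (fun i => t ≤ |x i|) := Finset.mem_filter.mpr ⟨hi₀, h⟩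
    rw [Finset.filter_erase, Finset.card_erase_of_mem hmem]
    have hpos : 1 ≤ (I.filter (fun i => t ≤ |x i|)).card := Finset.card_pos.mpr ⟨i₀, hmem⟩
    omega
  · push_neg at h
    have hempty : I.filter (fun i => t ≤ |x i|) = ∅ := by
      rw [Finset.filter_eq_empty_iff]
      intro i hi
      push_neg
      exact lt_of_le_of_lt (hmax i hi) h
    rw [Finset.filter_erase, hempty]
    simp only [Finset.erase_empty, Finset.card_empty]
    omega

lemma sum_eq_kthMaxOn {n : ℕ} (x : Fin n → ℝ) (I : Finset (Fin n)) :
    ∑ i ∈ I, |x i| = ∑ l ∈ Finset.Icc 1 I.card, kthMaxOn I l x := by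
  induction I using Finset.strongInduction with
  | _ I ih =>
    rcases I.eq_empty_or_nonempty with rfl | hne
    · simp
    · obtain ⟨i₀, hi₀, hmax⟩ := I.exists_max_image (fun i => |x i|) hne
      have hcard : 1 ≤ I.card := Finset.card_pos.mpr hne
      have hec : (I.erase i₀).card = I.card - 1 := Finset.card_erase_of_mem hi₀
      have hsum : ∑ i ∈ I, |x i| = |x i₀| + ∑ i ∈ I.erase i₀, |x i| :=
        (Finset.add_sum_erase I _ hi₀).symm
      rw [hsum, ih (I.erase i₀) (Finset.erase_ssubset hi₀)]
      have hconv : ∀ (J : Finset (Fin n)) (c : ℕ),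
          ∑ l ∈ Finset.Icc 1 c, kthMaxOn J l x = ∑ j ∈ Finset.range c, kthMaxOn J (1 + j) x := by
        intro J c
        rw [show Finset.Icc 1 c = Finset.Ico 1 (c + 1) by rw [Finset.Ico_add_one_right_eq_Icc]]
        rw [Finset.sum_Ico_eq_sum_range]
        simp
      rw [hconv, hconv, hec]
      rw [show I.card = (I.card - 1) + 1 by omega, Finset.sum_range_succ']
      have hterm0 : kthMaxOn I (1 + 0) x = |x i₀| := kthMaxOn_one x hi₀ hmax
      rw [hterm0]
      rw [add_comm (|x i₀|) _, ]
      congr 1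
      apply Finset.sum_congr rfl
      intro j hj
      have : kthMaxOn I (1 + (j + 1)) x = kthMaxOn (I.erase i₀) (1 + j) x := by
        rw [show 1 + (j + 1) = (1 + j) + 1 by omega]
        exact kthMaxOn_succ x hi₀ hmax (by omega)
      rw [this]




lemma kthMax_eq_kthMaxOn_univ {n : ℕ} (l : ℕ) (x : Fin n → ℝ) :
    kthMax l x = kthMaxOn Finset.univ l x := rfl

lemma kthMaxOn_le_kthMax {n : ℕ} (x : Fin n → ℝ) {I : Finset (Fin n)} {l : ℕ}
    (h1 : 1 ≤ l) (hl : l ≤ I.card) : kthMaxOn I l x ≤ kthMax l x := by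
  have hn : l ≤ n := hl.trans (by simpa using Finset.card_le_card I.subset_univ)
  obtain ⟨-, hiff⟩ := kthMax_key x h1 hn
  apply csSup_le
  · refine ⟨0, ?_⟩
    simp only [Set.mem_setOf_eq]
    rw [Finset.filter_true_of_mem (fun i _ => abs_nonneg (x i))]
    exact hl
  · intro t ht
    simp only [Set.mem_setOf_eq] at ht
    refine (hiff t).mp (le_trans ht (Finset.card_le_card ?_))
    exact Finset.filter_subset_filter _ (Finset.subset_univ I)

lemma maxKSum_eq_sum_kthMax {n : ℕ} (x : Fin n → ℝ) {k : ℕ} (hk1 : 1 ≤ k) (hkn : k ≤ n) :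
    maxKSum k x = ∑ l ∈ Finset.Icc 1 k, kthMax l x := by
  have hn0 : 0 < n := lt_of_lt_of_le hk1 hkn
  have hub : ∀ y ∈ {y | ∃ I : Finset (Fin n), I.card = k ∧ y = ∑ i ∈ I, |x i|},
      y ≤ ∑ l ∈ Finset.Icc 1 k, kthMax l x := by
    rintro y ⟨I, hI, rfl⟩
    rw [sum_eq_kthMaxOn x I, hI]
    refine Finset.sum_le_sum fun l hl => ?_
    obtain ⟨h1, h2⟩ := Finset.mem_Icc.mp hl
    exact kthMaxOn_le_kthMax x h1 (hI ▸ h2)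
  have hmem : (∑ l ∈ Finset.Icc 1 k, kthMax l x)
      ∈ {y | ∃ I : Finset (Fin n), I.card = k ∧ y = ∑ i ∈ I, |x i|} := by
    set σ := Tuple.sort (fun i => |x i|) with hσ
    set j0 : Fin n := ⟨n - k, by omega⟩ with hj0
    refine ⟨(Finset.Ici j0).image σ, ?_, ?_⟩
    · rw [Finset.card_image_of_injective _ σ.injective, Fin.card_Ici]
      simp only [hj0]; omega
    · rw [Finset.sum_image (fun a _ b _ h => σ.injective h)]
      apply Finset.sum_nbij' (i := fun l => (⟨n - max 1 l, by omega⟩ : Fin n))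
        (j := fun b => n - (b : ℕ))
      · intro l hl
        obtain ⟨h1, h2⟩ := Finset.mem_Icc.mp hl
        rw [Finset.mem_Ici]
        simp only [hj0, Fin.le_def]
        omega
      · intro b hb
        rw [Finset.mem_Ici] at hb
        simp only [hj0, Fin.le_def] at hb
        rw [Finset.mem_Icc]
        have := b.isLt
        omega
      · intro l hl
        obtain ⟨h1, h2⟩ := Finset.mem_Icc.mp hl
        simp only
        omega
      · intro b hb
        rw [Finset.mem_Ici] at hb
        simp only [hj0, Fin.le_def] at hb
        have := b.isLt
        apply Fin.ext
        simp only
        omega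
      · intro l hl
        obtain ⟨h1, h2⟩ := Finset.mem_Icc.mp hl
        obtain ⟨heq, -⟩ := kthMax_key x h1 (h2.trans hkn)
        rw [heq, hσ]
        have harg : (⟨n - l, by omega⟩ : Fin n) = ⟨n - max 1 l, by omega⟩ :=
          Fin.ext (by simp only [Fin.val_mk]; omega)
        rw [harg]
  exact le_antisymm (csSup_le ⟨_, hmem⟩ hub) (le_csSup ⟨_, hub⟩ hmem)

theorem stmt_2 {Ω : Type*} [MeasurableSpace Ω] (μ : Measure Ω) [IsProbabilityMeasure μ]
    {n k : ℕ} (hk1 : 1 ≤ k) (hkn : k ≤ n) (X : Fin n → Ω → ℝ)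
    (hmeas : ∀ i, Measurable (X i)) (hint : ∀ i, Integrable (X i) μ) :
    ∫ ω, maxKSum k (fun i => X i ω) ∂μ =
      ∫ s in Set.Ioi (0 : ℝ), ∑ l ∈ Finset.Icc 1 k,
        (μ {ω | l ≤ (Finset.univ.filter (fun i => s ≤ |X i ω|)).card}).toReal := by
  set f : ℕ → Ω → ℝ := fun l ω => kthMax l (fun i => X i ω) with hfdef
  set A : ℕ → ℝ → Set Ω :=
    fun l s => {ω | l ≤ (Finset.univ.filter (fun i => s ≤ |X i ω|)).card} with hAdef
  have hiff : ∀ l, 1 ≤ l → l ≤ n → ∀ (s : ℝ) (ω : Ω), (ω ∈ A l s ↔ s ≤ f l ω) :=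
    fun l h1 h2 s ω => (kthMax_key (fun i => X i ω) h1 h2).2 s
  have hAm : ∀ (l : ℕ) (s : ℝ), MeasurableSet (A l s) := by
    intro l s
    have hg : Measurable fun ω => (Finset.univ.filter (fun i => s ≤ |X i ω|)).card := by
      simp_rw [Finset.card_filter]
      exact Finset.measurable_sum _ fun i _ =>
        Measurable.ite (measurableSet_le measurable_const (hmeas i).abs)
          measurable_const measurable_const
    exact hg measurableSet_Ici
  have hfm : ∀ l, 1 ≤ l → l ≤ n → Measurable (f l) := by
    intro l h1 h2
    apply measurable_of_Ici
    intro s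
    have hs : f l ⁻¹' Set.Ici s = A l s := by
      ext ω
      simp only [Set.mem_preimage, Set.mem_Ici]
      exact (hiff l h1 h2 s ω).symm
    rw [hs]; exact hAm l s
  have hfnn : ∀ l, 1 ≤ l → l ≤ n → ∀ ω, 0 ≤ f l ω := by
    intro l h1 h2 ω
    refine (hiff l h1 h2 0 ω).mp ?_
    show l ≤ _
    rw [Finset.filter_true_of_mem (fun i _ => abs_nonneg _)]
    simpa using h2
  have hfle : ∀ l, 1 ≤ l → l ≤ n → ∀ ω, f l ω ≤ ∑ i, |X i ω| := by
    intro l h1 h2 ω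
    have hc : l ≤ (Finset.univ.filter (fun i => f l ω ≤ |X i ω|)).card :=
      (hiff l h1 h2 (f l ω) ω).mpr le_rfl
    obtain ⟨i, hi⟩ := Finset.card_pos.mp (lt_of_lt_of_le h1 hc)
    simp only [Finset.mem_filter] at hi
    exact hi.2.trans (Finset.single_le_sum (fun j _ => abs_nonneg (X j ω)) (Finset.mem_univ i))
  have hfint : ∀ l, 1 ≤ l → l ≤ n → Integrable (f l) μ := by
    intro l h1 h2
    have hS : Integrable (fun ω => ∑ i, |X i ω|) μ :=
      integrable_finset_sum _ fun i _ => (hint i).abs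
    refine hS.mono ((hfm l h1 h2).aestronglyMeasurable) (Filter.Eventually.of_forall fun ω => ?_)
    rw [Real.norm_eq_abs, Real.norm_eq_abs, abs_of_nonneg (hfnn l h1 h2 ω),
      abs_of_nonneg (Finset.sum_nonneg fun i _ => abs_nonneg _)]
    exact hfle l h1 h2 ω
  have hset : ∀ l, 1 ≤ l → l ≤ n → ∀ s : ℝ, {ω | s ≤ f l ω} = A l s :=
    fun l h1 h2 s => Set.ext fun ω => (hiff l h1 h2 s ω).symm
  -- step 1
  have step1 : ∫ ω, maxKSum k (fun i => X i ω) ∂μ = ∑ l ∈ Finset.Icc 1 k, ∫ ω, f l ω ∂μ := by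
    rw [show (fun ω => maxKSum k (fun i => X i ω)) = fun ω => ∑ l ∈ Finset.Icc 1 k, f l ω from
      funext fun ω => maxKSum_eq_sum_kthMax _ hk1 hkn]
    exact integral_finset_sum _ fun l hl =>
      hfint l (Finset.mem_Icc.mp hl).1 ((Finset.mem_Icc.mp hl).2.trans hkn)
  -- step 2
  have step2 : ∀ l, 1 ≤ l → l ≤ n →
      ∫ ω, f l ω ∂μ = (∫⁻ s in Set.Ioi (0 : ℝ), μ (A l s)).toReal := by
    intro l h1 h2
    rw [integral_eq_lintegral_of_nonneg_ae (Filter.Eventually.of_forall (hfnn l h1 h2))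
      (hfm l h1 h2).aestronglyMeasurable]
    congr 1
    rw [lintegral_eq_lintegral_meas_le μ (Filter.Eventually.of_forall (hfnn l h1 h2))
      (hfm l h1 h2).aemeasurable]
    exact lintegral_congr fun s => by rw [hset l h1 h2 s]
  -- finiteness
  have hfin : ∀ l, 1 ≤ l → l ≤ n → (∫⁻ s in Set.Ioi (0 : ℝ), μ (A l s)) ≠ ⊤ := by
    intro l h1 h2
    have hkey : (∫⁻ s in Set.Ioi (0 : ℝ), μ (A l s)) = ∫⁻ ω, ENNReal.ofReal (f l ω) ∂μ := by
      rw [lintegral_eq_lintegral_meas_le μ (Filter.Eventually.of_forall (hfnn l h1 h2))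
        (hfm l h1 h2).aemeasurable]
      exact lintegral_congr fun s => by rw [hset l h1 h2 s]
    rw [hkey]
    have hb := (hfint l h1 h2).hasFiniteIntegral
    rw [hasFiniteIntegral_iff_norm] at hb
    refine ne_top_of_lt (lt_of_le_of_lt (lintegral_mono fun ω => ?_) hb)
    rw [Real.norm_eq_abs]
    exact ENNReal.ofReal_le_ofReal (le_abs_self _)
  -- measurability in s
  have hGm : ∀ l : ℕ, Measurable fun s : ℝ => μ (A l s) := by
    intro l
    apply Antitone.measurable
    intro s s' hss'
    apply measure_mono
    intro ω hω
    simp only [hAdef, Set.mem_setOf_eq] at hω ⊢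
    refine le_trans hω (Finset.card_le_card ?_)
    exact Finset.monotone_filter_right _ fun i _ hi => le_trans hss' hi
  -- RHS
  have hRHS : ∫ s in Set.Ioi (0 : ℝ), ∑ l ∈ Finset.Icc 1 k, (μ (A l s)).toReal
      = (∑ l ∈ Finset.Icc 1 k, ∫⁻ s in Set.Ioi (0 : ℝ), μ (A l s)).toReal := by
    rw [integral_eq_lintegral_of_nonneg_ae
      (Filter.Eventually.of_forall fun s =>
        Finset.sum_nonneg fun l _ => ENNReal.toReal_nonneg)
      ((Finset.measurable_sum _ fun l _ => (hGm l).ennreal_toReal).aestronglyMeasurable)]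
    congr 1
    have hOf : ∀ s : ℝ, ENNReal.ofReal (∑ l ∈ Finset.Icc 1 k, (μ (A l s)).toReal)
        = ∑ l ∈ Finset.Icc 1 k, μ (A l s) := by
      intro s
      rw [ENNReal.ofReal_sum_of_nonneg fun l _ => ENNReal.toReal_nonneg]
      exact Finset.sum_congr rfl fun l _ => ENNReal.ofReal_toReal (measure_ne_top μ _)
    rw [lintegral_congr hOf]
    exact lintegral_finset_sum _ fun l _ => hGm l
  rw [step1, hRHS, ENNReal.toReal_sum
    (fun l hl => hfin l (Finset.mem_Icc.mp hl).1 ((Finset.mem_Icc.mp hl).2.trans hkn))]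
  exact Finset.sum_congr rfl fun l hl =>
    step2 l (Finset.mem_Icc.mp hl).1 ((Finset.mem_Icc.mp hl).2.trans hkn)
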